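/- Assume C = C(k,m,ρ,σ) is positive semidefinite and let μ = N(0, C) be the centered multivariate Gaussian on ℝ^{k^m} with covariance C. For every 0 ≤ p ≤ m and 0 ≤ r < k^p, the pushforward of μ under the map x ↦ Σ_{u ∈ J(p,r)} x_u is the one-dimensional Gaussian with mean 0 and variance σ_{(p)}² = σ²·(k + (k² − k)ρ)^{m−p}. In particular, the total portfolio Z = Σ_u X_u is normal with mean 0 and standard deviation σ_Z = σ·(k + (k² − k)ρ)^{m/2} (the main theorem on the regular Gaussian tree: every node at level p is N(0, σ²(k+(k²−k)ρ)^{m−p})). -/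

import Mathlib

open MeasureTheory ProbabilityTheory
open scoped Classical

/-- The standard Gaussian measure on `ℝ^n`: product of `n` standard normal measures. -/
noncomputable def stdGaussianPi (n : ℕ) : Measure (Fin n → ℝ) :=
  Measure.pi fun _ => gaussianReal 0 1

/-- The multivariate Gaussian measure `N(μ, S)` on `ℝ^n` with mean vector `μ` and
(positive semidefinite) covariance matrix `S`, defined as the pushforward of the standard
Gaussian under `x ↦ μ + √S x`. (Junk value: the standard Gaussian if `S` is not psd.) -/
noncomputable def multivariateGaussian' {n : ℕ} (μ : Fin n → ℝ)
    (S : Matrix (Fin n) (Fin n) ℝ) : Measure (Fin n → ℝ) :=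
  if h : S.PosSemidef then (stdGaussianPi n).map (fun x => μ + (h.1.eigenvectorUnitary.1 * Matrix.diagonal ((RCLike.ofReal : ℝ → ℝ) ∘ (√·) ∘ h.1.eigenvalues) *
      (star h.1.eigenvectorUnitary : Matrix (Fin n) (Fin n) ℝ)).mulVec x)
  else stdGaussianPi n

instance stdGaussianPi.instIsProbabilityMeasure (n : ℕ) :
    IsProbabilityMeasure (stdGaussianPi n) := by
  unfold stdGaussianPi; infer_instance

instance multivariateGaussian'.instIsProbabilityMeasure {n : ℕ} (μ : Fin n → ℝ)
    (S : Matrix (Fin n) (Fin n) ℝ) :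
    IsProbabilityMeasure (multivariateGaussian' μ S) := by
  unfold multivariateGaussian'
  split
  · rename_i h
    refine Measure.isProbabilityMeasure_map ?_
    exact (Measurable.aemeasurable (by
      have : Continuous fun x : Fin n → ℝ => μ + (h.1.eigenvectorUnitary.1 * Matrix.diagonal ((RCLike.ofReal : ℝ → ℝ) ∘ (√·) ∘ h.1.eigenvalues) *
      (star h.1.eigenvectorUnitary : Matrix (Fin n) (Fin n) ℝ)).mulVec x :=
        continuous_const.add (continuous_const.matrix_mulVec continuous_id)
      exact this.measurable))
  · infer_instance

/-- `lcaHeight k i j` is the height above the leaves of the lowest common ancestor of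
leaves `i` and `j` in the infinite `k`-ary tree: the least `l ≥ 1` with `⌊i/k^l⌋ = ⌊j/k^l⌋`. -/
noncomputable def lcaHeight (k i j : ℕ) : ℕ := sInf {l | 1 ≤ l ∧ i / k ^ l = j / k ^ l}

/-- The covariance matrix of the regular `(k,m)` conditionally independent Gaussian tree with
leaf standard deviation `σ` and dependency parameter `ρ`. -/
noncomputable def treeCov (k m : ℕ) (ρ σ : ℝ) : Matrix (Fin (k ^ m)) (Fin (k ^ m)) ℝ :=
  Matrix.of fun i j =>
    if (i : ℕ) = (j : ℕ) then σ ^ 2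
    else σ ^ 2 * ρ * (1 / (k : ℝ) + (1 - 1 / (k : ℝ)) * ρ) ^ (lcaHeight k i j - 1)

/-- `treeBlock k m p r` is the set `J(p,r)` of leaves of the regular `(k,m)` tree descending
from the `r`-th node at level `p`. -/
def treeBlock (k m p r : ℕ) : Finset (Fin (k ^ m)) :=
  Finset.univ.filter fun i => (i : ℕ) / k ^ (m - p) = r


section aux
open Real Finset
open scoped NNReal ENNReal

lemma sqrt_alg (V₁ V₂ : ℝ) (h₁ : 0 < V₁) (h₂ : 0 < V₂) :
    (√(2*π*V₁))⁻¹ * (√(2*π*V₂))⁻¹ * √(π / ((V₁+V₂)/(2*V₁*V₂))) = (√(2*π*(V₁+V₂)))⁻¹ := by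
  have hpi := Real.pi_pos
  rw [← Real.sqrt_inv, ← Real.sqrt_inv, ← Real.sqrt_inv, ← Real.sqrt_mul (by positivity),
    ← Real.sqrt_mul (by positivity)]
  congr 1
  field_simp

lemma pdf_conv (v₁ v₂ : ℝ≥0) (h₁ : v₁ ≠ 0) (h₂ : v₂ ≠ 0) (y : ℝ) :
    ∫ x, gaussianPDFReal 0 v₁ x * gaussianPDFReal x v₂ y = gaussianPDFReal 0 (v₁+v₂) y := by
  have hV₁ : 0 < (v₁:ℝ) := NNReal.coe_pos.mpr (zero_lt_iff.mpr h₁)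
  have hV₂ : 0 < (v₂:ℝ) := NNReal.coe_pos.mpr (zero_lt_iff.mpr h₂)
  set V₁ := (v₁:ℝ); set V₂ := (v₂:ℝ)
  set a : ℝ := (V₁+V₂)/(2*V₁*V₂) with ha_def
  have ha : 0 < a := by positivity
  set b : ℝ := V₁*y/(V₁+V₂) with hb_def
  set D : ℝ := (√(2*π*V₁))⁻¹ * (√(2*π*V₂))⁻¹ * rexp (-(y^2)/(2*(V₁+V₂))) with hD_def
  have key : ∀ x, gaussianPDFReal 0 v₁ x * gaussianPDFReal x v₂ y
      = D * rexp (-a*(x-b)^2) := by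
    intro x
    unfold gaussianPDFReal
    have hE : -(x-0)^2/(2*V₁) + -(y-x)^2/(2*V₂) = -(y^2)/(2*(V₁+V₂)) + -a*(x-b)^2 := by
      rw [ha_def, hb_def]
      field_simp
      ring
    calc (√(2*π*V₁))⁻¹ * rexp (-(x-0)^2/(2*V₁)) * ((√(2*π*V₂))⁻¹ * rexp (-(y-x)^2/(2*V₂)))
        = (√(2*π*V₁))⁻¹ * (√(2*π*V₂))⁻¹ * rexp (-(x-0)^2/(2*V₁) + -(y-x)^2/(2*V₂)) := by
          rw [Real.exp_add]; ring
      _ = D * rexp (-a*(x-b)^2) := by rw [hE, hD_def, Real.exp_add]; ring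
  rw [integral_congr_ae (Filter.Eventually.of_forall key)]
  rw [integral_const_mul]
  have : (∫ x : ℝ, rexp (-a*(x-b)^2)) = ∫ x : ℝ, rexp (-a*x^2) :=
    integral_sub_right_eq_self (fun x => rexp (-a*x^2)) b
  rw [this, integral_gaussian]
  unfold gaussianPDFReal
  have coe : ((v₁+v₂ : ℝ≥0) : ℝ) = V₁ + V₂ := by push_cast; ring
  rw [coe, hD_def, ← sqrt_alg V₁ V₂ hV₁ hV₂]
  rw [ha_def]
  ring_nf

lemma pdf_conv_integrable (v₁ v₂ : ℝ≥0) (h₁ : v₁ ≠ 0) (h₂ : v₂ ≠ 0) (y : ℝ) :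
    Integrable (fun x => gaussianPDFReal 0 v₁ x * gaussianPDFReal x v₂ y) := by
  have hV₁ : 0 < (v₁:ℝ) := NNReal.coe_pos.mpr (zero_lt_iff.mpr h₁)
  have hV₂ : 0 < (v₂:ℝ) := NNReal.coe_pos.mpr (zero_lt_iff.mpr h₂)
  set V₁ := (v₁:ℝ); set V₂ := (v₂:ℝ)
  set a : ℝ := (V₁+V₂)/(2*V₁*V₂) with ha_def
  have ha : 0 < a := by positivity
  set b : ℝ := V₁*y/(V₁+V₂) with hb_def
  set D : ℝ := (√(2*π*V₁))⁻¹ * (√(2*π*V₂))⁻¹ * rexp (-(y^2)/(2*(V₁+V₂))) with hD_def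
  have key : ∀ x, gaussianPDFReal 0 v₁ x * gaussianPDFReal x v₂ y
      = D * rexp (-a*(x-b)^2) := by
    intro x
    unfold gaussianPDFReal
    have hE : -(x-0)^2/(2*V₁) + -(y-x)^2/(2*V₂) = -(y^2)/(2*(V₁+V₂)) + -a*(x-b)^2 := by
      rw [ha_def, hb_def]
      field_simp
      ring
    calc (√(2*π*V₁))⁻¹ * rexp (-(x-0)^2/(2*V₁)) * ((√(2*π*V₂))⁻¹ * rexp (-(y-x)^2/(2*V₂)))
        = (√(2*π*V₁))⁻¹ * (√(2*π*V₂))⁻¹ * rexp (-(x-0)^2/(2*V₁) + -(y-x)^2/(2*V₂)) := by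
          rw [Real.exp_add]; ring
      _ = D * rexp (-a*(x-b)^2) := by rw [hE, hD_def, Real.exp_add]; ring
  simp_rw [key]
  exact ((integrable_exp_neg_mul_sq ha).comp_sub_right b).const_mul D

lemma gaussianReal_prod_map_add (v₁ v₂ : ℝ≥0) :
    ((gaussianReal 0 v₁).prod (gaussianReal 0 v₂)).map (fun p : ℝ × ℝ => p.1 + p.2)
      = gaussianReal 0 (v₁ + v₂) := by
  by_cases h₁ : v₁ = 0
  · subst h₁
    rw [gaussianReal_zero_var, Measure.dirac_prod,
      Measure.map_map (by fun_prop) (by fun_prop)]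
    simp only [Function.comp_def, zero_add]
    simp [Measure.map_id]
  by_cases h₂ : v₂ = 0
  · subst h₂
    rw [gaussianReal_zero_var, Measure.prod_dirac,
      Measure.map_map (by fun_prop) (by fun_prop)]
    simp only [Function.comp_def, add_zero]
    simp [Measure.map_id]
  have h12 : v₁ + v₂ ≠ 0 := by simp [h₁, h₂]
  have hjm2 : Measurable (Function.uncurry fun x y : ℝ => gaussianPDF x v₂ y) := by
    unfold gaussianPDF gaussianPDFReal
    apply Measurable.ennreal_ofReal
    apply Measurable.const_mul
    exact (((measurable_snd.sub measurable_fst).pow_const 2).neg.div_const _).exp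
  have hjm : Measurable (Function.uncurry fun x y : ℝ => gaussianPDF 0 v₁ x * gaussianPDF x v₂ y) :=
    (((measurable_gaussianPDFReal 0 v₁).comp measurable_fst).ennreal_ofReal).mul hjm2
  ext s hs
  rw [Measure.map_apply (by fun_prop) hs,
    Measure.prod_apply (measurable_add hs)]
  have slice : ∀ x : ℝ, (gaussianReal 0 v₂) (Prod.mk x ⁻¹' ((fun p : ℝ × ℝ => p.1 + p.2) ⁻¹' s))
      = ∫⁻ y in s, gaussianPDF x v₂ y := by
    intro x
    have : (Prod.mk x ⁻¹' ((fun p : ℝ × ℝ => p.1 + p.2) ⁻¹' s)) = (fun y => x + y) ⁻¹' s := rfl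
    rw [this, ← Measure.map_apply (by fun_prop) hs, gaussianReal_map_const_add,
      zero_add, gaussianReal_apply _ h₂]
  simp_rw [slice]
  rw [gaussianReal_of_var_ne_zero _ h₁,
    lintegral_withDensity_eq_lintegral_mul (volume : Measure ℝ) (show Measurable (gaussianPDF 0 v₁) from (measurable_gaussianPDFReal 0 v₁).ennreal_ofReal)
      (show Measurable fun x => ∫⁻ y in s, gaussianPDF x v₂ y from hjm2.lintegral_prod_right)]
  simp only [Pi.mul_apply]
  have push : ∀ x : ℝ, gaussianPDF 0 v₁ x * ∫⁻ y in s, gaussianPDF x v₂ y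
      = ∫⁻ y in s, gaussianPDF 0 v₁ x * gaussianPDF x v₂ y := fun x =>
    (lintegral_const_mul' _ _ ENNReal.ofReal_ne_top).symm
  simp_rw [push]
  rw [lintegral_lintegral_swap (μ := (volume : Measure ℝ)) (ν := (volume : Measure ℝ).restrict s) hjm.aemeasurable]
  have inner : ∀ y : ℝ, (∫⁻ x, gaussianPDF 0 v₁ x * gaussianPDF x v₂ y)
      = gaussianPDF 0 (v₁ + v₂) y := by
    intro y
    unfold gaussianPDF
    simp_rw [← ENNReal.ofReal_mul (gaussianPDFReal_nonneg 0 v₁ _)]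
    rw [← ofReal_integral_eq_lintegral_ofReal (pdf_conv_integrable v₁ v₂ h₁ h₂ y)
      (ae_of_all _ fun x => mul_nonneg (gaussianPDFReal_nonneg _ _ _) (gaussianPDFReal_nonneg _ _ _)),
      pdf_conv v₁ v₂ h₁ h₂ y]
  simp_rw [inner]
  rw [gaussianReal_apply _ h12]

lemma stdGaussianPi_map_linear (n : ℕ) (a : Fin n → ℝ) :
    (stdGaussianPi n).map (fun x => ∑ i, a i * x i)
      = gaussianReal 0 (∑ i, (a i)^2).toNNReal := by
  induction n with
  | zero =>
    rw [show (fun x : Fin 0 → ℝ => ∑ i, a i * x i) = fun _ => (0:ℝ) from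
      funext fun x => by simp, Measure.map_const]
    simp
  | succ n ih =>
    have hmp := measurePreserving_piFinSuccAbove (fun _ : Fin (n+1) => gaussianReal 0 1) 0
    set e := MeasurableEquiv.piFinSuccAbove (fun _ : Fin (n+1) => ℝ) 0 with he
    set f : ℝ → ℝ := fun t => a 0 * t with hf
    set g : (Fin n → ℝ) → ℝ := fun y => ∑ j : Fin n, a j.succ * y j with hg
    have hgm : Measurable g := by fun_prop
    have step1 : (stdGaussianPi (n+1)).map (fun x => ∑ i, a i * x i)
        = ((gaussianReal 0 1).prod (stdGaussianPi n)).map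
            ((fun p : ℝ × ℝ => p.1 + p.2) ∘ Prod.map f g) := by
      have : ((fun p : ℝ × ℝ => p.1 + p.2) ∘ Prod.map f g) ∘ e
          = fun x => ∑ i, a i * x i := by
        funext x
        simp only [Function.comp_apply, he, MeasurableEquiv.piFinSuccAbove_apply, Prod.map,
          Fin.insertNthEquiv, Fin.sum_univ_succ, hf, hg]
        simp [Fin.succAbove_zero, Fin.tail]
      rw [← this, ← Measure.map_map (by fun_prop) e.measurable]
      congr 1
      exact hmp.map_eq
    rw [step1, ← Measure.map_map (by fun_prop) (by fun_prop),
      ← Measure.map_prod_map _ _ (by fun_prop) hgm]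
    have h1 : (gaussianReal 0 1).map f = gaussianReal 0 ((a 0 ^ 2).toNNReal) := by
      rw [hf]
      have := gaussianReal_map_const_mul (μ := 0) (v := 1) (a 0)
      simp only [mul_zero, mul_one] at this
      rw [this]
      congr 1
      ext
      simp [Real.coe_toNNReal _ (sq_nonneg (a 0))]
    rw [h1, ih, gaussianReal_prod_map_add]
    congr 1
    rw [Fin.sum_univ_succ, Real.toNNReal_add (sq_nonneg _) (Finset.sum_nonneg fun _ _ => sq_nonneg _)]

section lca
variable {k m u v : ℕ}

lemma div_pow_mono (hk : 1 ≤ k) {u v l l' : ℕ} (h : u / k ^ l = v / k ^ l) (hll : l ≤ l') :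
    u / k ^ l' = v / k ^ l' := by
  have hkl : k ^ l' = k ^ l * k ^ (l' - l) := by rw [← pow_add, Nat.add_sub_cancel' hll]
  rw [hkl, ← Nat.div_div_eq_div_mul, ← Nat.div_div_eq_div_mul, h]

lemma lca_nonempty (hk : 1 ≤ k) (hm : 1 ≤ m) (hu : u < k ^ m) (hv : v < k ^ m) :
    m ∈ {l | 1 ≤ l ∧ u / k ^ l = v / k ^ l} :=
  ⟨hm, by rw [Nat.div_eq_of_lt hu, Nat.div_eq_of_lt hv]⟩

lemma one_le_lcaHeight (hk : 1 ≤ k) (hm : 1 ≤ m) (hu : u < k ^ m) (hv : v < k ^ m) :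
    1 ≤ lcaHeight k u v :=
  (Nat.sInf_mem (Set.nonempty_of_mem (lca_nonempty hk hm hu hv))).1

lemma lcaHeight_le_iff (hk : 1 ≤ k) (hm : 1 ≤ m) (hu : u < k ^ m) (hv : v < k ^ m)
    {l : ℕ} (hl : 1 ≤ l) :
    lcaHeight k u v ≤ l ↔ u / k ^ l = v / k ^ l := by
  constructor
  · intro h
    exact div_pow_mono hk (Nat.sInf_mem (Set.nonempty_of_mem (lca_nonempty hk hm hu hv))).2 h
  · intro h
    exact Nat.sInf_le ⟨hl, h⟩

lemma lcaHeight_eq_iff (hk : 1 ≤ k) (hm : 1 ≤ m) (hu : u < k ^ m) (hv : v < k ^ m)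
    (hne : u ≠ v) {l : ℕ} (hl : 1 ≤ l) :
    lcaHeight k u v = l ↔ u / k ^ l = v / k ^ l ∧ u / k ^ (l - 1) ≠ v / k ^ (l - 1) := by
  constructor
  · intro h
    refine ⟨(lcaHeight_le_iff hk hm hu hv hl).mp h.le, fun hcon => ?_⟩
    rcases Nat.eq_zero_or_pos (l - 1) with h0 | hpos
    · rw [h0] at hcon; simp only [pow_zero, Nat.div_one] at hcon; exact hne hcon
    · have := (lcaHeight_le_iff hk hm hu hv hpos).mpr hcon
      omega
  · rintro ⟨h1, h2⟩
    have hle := (lcaHeight_le_iff hk hm hu hv hl).mpr h1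
    have hge : ¬ lcaHeight k u v ≤ l - 1 := by
      intro hcon
      rcases Nat.eq_zero_or_pos (l - 1) with h0 | hpos
      · have := one_le_lcaHeight hk hm hu hv (k := k); omega
      · exact h2 ((lcaHeight_le_iff hk hm hu hv hpos).mp hcon)
    omega

end lca

lemma card_filter_div (n A c : ℕ) (hA : 0 < A) (h : A * (c + 1) ≤ n) :
    (Finset.univ.filter (fun v : Fin n => (v : ℕ) / A = c)).card = A := by
  have key : (Finset.univ.filter (fun v : Fin n => (v : ℕ) / A = c)).card
      = (Finset.range A).card := by
   refine Finset.card_nbij' (fun v => (v : ℕ) % A)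
     (fun x => (⟨c * A + x % A, by
       have hx : x % A < A := Nat.mod_lt _ hA
       calc c * A + x % A < c * A + A := by omega
         _ = A * (c + 1) := by ring
         _ ≤ n := h⟩ : Fin n)) ?_ ?_ ?_ ?_
   · intro v _
     exact Finset.mem_range.mpr (Nat.mod_lt _ hA)
   · intro x hx
     simp only [Finset.mem_coe, Finset.mem_filter, Finset.mem_univ, true_and]
     show (c * A + x % A) / A = c
     rw [mul_comm c A, Nat.mul_add_div hA, Nat.div_eq_of_lt (Nat.mod_lt _ hA), add_zero]
   · intro v hv
     have hdiv : (v : ℕ) / A = c := (Finset.mem_filter.mp hv).2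
     apply Fin.ext
     show c * A + (v : ℕ) % A % A = (v : ℕ)
     rw [Nat.mod_mod_of_dvd _ dvd_rfl, ← hdiv]
     exact Nat.div_add_mod' _ _
   · intro x hx
     have hxA : x < A := Finset.mem_range.mp hx
     show (c * A + x % A) % A = x
     rw [Nat.mod_eq_of_lt hxA, mul_comm c A, Nat.mul_add_mod, Nat.mod_eq_of_lt hxA]
  rw [key, Finset.card_range]


lemma treeCov_blockSum (k m : ℕ) (hk : 2 ≤ k) (hm : 1 ≤ m) (σ ρ : ℝ)
    (p r : ℕ) (hp : p ≤ m) (hr : r < k ^ p) :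
    ∑ u ∈ treeBlock k m p r, ∑ v ∈ treeBlock k m p r, treeCov k m ρ σ u v
      = σ ^ 2 * ((k : ℝ) + ((k : ℝ) ^ 2 - (k : ℝ)) * ρ) ^ (m - p) := by
  have hk1 : 1 ≤ k := by omega
  have hk0 : 0 < k := by omega
  have hK2 : (2:ℝ) ≤ (k:ℝ) := by exact_mod_cast hk
  have hK0 : (k:ℝ) ≠ 0 := by linarith
  by_cases hM0 : m - p = 0
  · -- p = m : singleton block
    have hpm : p = m := by omega
    have hr' : r < k ^ m := by rw [← hpm]; exact hr
    have hsingle : treeBlock k m p r = {(⟨r, hr'⟩ : Fin (k ^ m))} := by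
      ext v
      simp [treeBlock, hM0, Fin.ext_iff]
    rw [hsingle, Finset.sum_singleton, Finset.sum_singleton, hM0, pow_zero, mul_one]
    simp [treeCov]
  -- main case
  have hM : 1 ≤ m - p := by omega
  set J := treeBlock k m p r with hJ
  have hJmem : ∀ v : Fin (k ^ m), v ∈ J ↔ (v : ℕ) / k ^ (m - p) = r := by
    intro v; simp [hJ, treeBlock]
  have hcardJ : J.card = k ^ (m - p) := by
    rw [hJ]
    unfold treeBlock
    refine card_filter_div _ _ _ (Nat.pow_pos hk0) ?_
    calc k ^ (m - p) * (r + 1) ≤ k ^ (m - p) * k ^ p :=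
          Nat.mul_le_mul_left _ hr
      _ = k ^ m := by rw [← pow_add]; congr 1; omega
  set q : ℝ := 1 / (k : ℝ) + (1 - 1 / (k : ℝ)) * ρ with hq
  set G : ℝ := ∑ l ∈ Finset.Icc 1 (m - p), ((k ^ l - k ^ (l - 1) : ℕ) : ℝ) * q ^ (l - 1) with hG
  have inner : ∀ u ∈ J, ∑ v ∈ J, treeCov k m ρ σ u v = σ ^ 2 + σ ^ 2 * ρ * G := by
    intro u hu
    have hur : (u : ℕ) / k ^ (m - p) = r := (hJmem u).mp hu
    rw [← Finset.sum_erase_add _ _ hu]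
    have hdiag : treeCov k m ρ σ u u = σ ^ 2 := by simp [treeCov]
    rw [hdiag]
    have hentry : ∀ v ∈ J.erase u, treeCov k m ρ σ u v
        = σ ^ 2 * ρ * q ^ (lcaHeight k (u : ℕ) (v : ℕ) - 1) := by
      intro v hv
      obtain ⟨hne, hvJ⟩ := Finset.mem_erase.mp hv
      have hne' : (u : ℕ) ≠ (v : ℕ) := fun h => hne (Fin.ext h.symm)
      simp [treeCov, hne', hq]
    rw [Finset.sum_congr rfl hentry, ← Finset.mul_sum]
    have hfib : ∑ v ∈ J.erase u, q ^ (lcaHeight k (u : ℕ) (v : ℕ) - 1)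
        = ∑ l ∈ Finset.Icc 1 (m - p), ∑ v ∈ (J.erase u).filter
            (fun v : Fin (k ^ m) => lcaHeight k (u : ℕ) (v : ℕ) = l), q ^ (l - 1) := by
      refine (Finset.sum_fiberwise_of_maps_to' ?_ (fun l => q ^ (l - 1))).symm
      intro v hv
      obtain ⟨hne, hvJ⟩ := Finset.mem_erase.mp hv
      have hvr : (v : ℕ) / k ^ (m - p) = r := (hJmem v).mp hvJ
      rw [Finset.mem_Icc]
      constructor
      · exact one_le_lcaHeight hk1 hm u.isLt v.isLt
      · exact (lcaHeight_le_iff hk1 hm u.isLt v.isLt hM).mpr (hur.trans hvr.symm)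
    rw [hfib]
    have hfibcard : ∀ l ∈ Finset.Icc 1 (m - p),
        ((J.erase u).filter (fun v : Fin (k ^ m) => lcaHeight k (u : ℕ) (v : ℕ) = l)).card
          = k ^ l - k ^ (l - 1) := by
      intro l hl
      obtain ⟨hl1, hlM⟩ := Finset.mem_Icc.mp hl
      have hset : (J.erase u).filter (fun v : Fin (k ^ m) => lcaHeight k (u : ℕ) (v : ℕ) = l)
          = (Finset.univ.filter (fun v : Fin (k ^ m) => (v : ℕ) / k ^ l = (u : ℕ) / k ^ l))
            \ (Finset.univ.filter (fun v : Fin (k ^ m) =>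
                (v : ℕ) / k ^ (l - 1) = (u : ℕ) / k ^ (l - 1))) := by
        ext v
        simp only [Finset.mem_filter, Finset.mem_erase, Finset.mem_sdiff, Finset.mem_univ,
          true_and]
        constructor
        · rintro ⟨⟨hne, hvJ⟩, hlca⟩
          have hne' : (u : ℕ) ≠ (v : ℕ) := fun h => hne (Fin.ext h.symm)
          have := (lcaHeight_eq_iff hk1 hm u.isLt v.isLt hne' hl1).mp hlca
          exact ⟨this.1.symm, fun h => this.2 h.symm⟩
        · rintro ⟨h1, h2⟩
          have hne' : (u : ℕ) ≠ (v : ℕ) := by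
            intro h
            exact h2 (by rw [h])
          have hvJ : v ∈ J := by
            rw [hJmem]
            rw [← hur]
            exact div_pow_mono hk1 h1 hlM
          refine ⟨⟨fun h => hne' (congrArg Fin.val h).symm, hvJ⟩, ?_⟩
          exact (lcaHeight_eq_iff hk1 hm u.isLt v.isLt hne' hl1).mpr
            ⟨h1.symm, fun h => h2 h.symm⟩
      rw [hset]
      have hsub : (Finset.univ.filter (fun v : Fin (k ^ m) =>
            (v : ℕ) / k ^ (l - 1) = (u : ℕ) / k ^ (l - 1)))
          ⊆ (Finset.univ.filter (fun v : Fin (k ^ m) => (v : ℕ) / k ^ l = (u : ℕ) / k ^ l)) := by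
        intro v hv
        simp only [Finset.mem_filter, Finset.mem_univ, true_and] at hv ⊢
        exact div_pow_mono hk1 hv (by omega)
      rw [Finset.card_sdiff_of_subset hsub]
      have hc1 : (Finset.univ.filter (fun v : Fin (k ^ m) =>
          (v : ℕ) / k ^ l = (u : ℕ) / k ^ l)).card = k ^ l := by
        refine card_filter_div _ _ _ (Nat.pow_pos hk0) ?_
        have hlm : l ≤ m := by omega
        have hult : (u : ℕ) / k ^ l < k ^ (m - l) := by
          rw [Nat.div_lt_iff_lt_mul (Nat.pow_pos hk0), ← pow_add]
          have : m - l + l = m := by omega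
          rw [this]
          exact u.isLt
        calc k ^ l * ((u : ℕ) / k ^ l + 1) ≤ k ^ l * k ^ (m - l) :=
              Nat.mul_le_mul_left _ hult
          _ = k ^ m := by rw [← pow_add]; congr 1; omega
      have hc2 : (Finset.univ.filter (fun v : Fin (k ^ m) =>
          (v : ℕ) / k ^ (l - 1) = (u : ℕ) / k ^ (l - 1))).card = k ^ (l - 1) := by
        refine card_filter_div _ _ _ (Nat.pow_pos hk0) ?_
        have hlm : l - 1 ≤ m := by omega
        have hult : (u : ℕ) / k ^ (l - 1) < k ^ (m - (l - 1)) := by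
          rw [Nat.div_lt_iff_lt_mul (Nat.pow_pos hk0), ← pow_add]
          have : m - (l - 1) + (l - 1) = m := by omega
          rw [this]
          exact u.isLt
        calc k ^ (l - 1) * ((u : ℕ) / k ^ (l - 1) + 1) ≤ k ^ (l - 1) * k ^ (m - (l - 1)) :=
              Nat.mul_le_mul_left _ hult
          _ = k ^ m := by rw [← pow_add]; congr 1; omega
      rw [hc1, hc2]
    have : ∑ l ∈ Finset.Icc 1 (m - p), ∑ v ∈ (J.erase u).filter
        (fun v : Fin (k ^ m) => lcaHeight k (u : ℕ) (v : ℕ) = l), q ^ (l - 1) = G := by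
      rw [hG]
      refine Finset.sum_congr rfl fun l hl => ?_
      rw [Finset.sum_const, hfibcard l hl, nsmul_eq_mul]
    rw [this]
    ring
  rw [Finset.sum_congr rfl inner, Finset.sum_const, hcardJ, nsmul_eq_mul]
  -- algebra
  have hcast : ∀ i : ℕ, ((k ^ (i + 1) - k ^ i : ℕ) : ℝ) = (k : ℝ) ^ (i + 1) - (k : ℝ) ^ i := by
    intro i
    rw [Nat.cast_sub (Nat.pow_le_pow_right hk1 (Nat.le_succ i))]
    push_cast [pow_succ]
    ring
  have hGval : G = ∑ i ∈ Finset.range (m - p), ((k : ℝ) ^ (i + 1) - (k : ℝ) ^ i) * q ^ i := by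
    rw [hG, show Finset.Icc 1 (m - p) = Finset.Ico 1 (m - p + 1) from by
      rw [Finset.Ico_add_one_right_eq_Icc], Finset.sum_Ico_eq_sum_range]
    refine Finset.sum_congr (by norm_num) fun i _ => ?_
    rw [show 1 + i = i + 1 from by omega, show i + 1 - 1 = i from rfl, hcast]
  set t : ℝ := 1 + ((k : ℝ) - 1) * ρ with ht
  have hkq : (k : ℝ) * q = t := by
    rw [hq, ht]
    field_simp
  have hrG : ρ * G = t ^ (m - p) - 1 := by
    rw [hGval, Finset.mul_sum]
    have hterm : ∀ i : ℕ, ρ * (((k : ℝ) ^ (i + 1) - (k : ℝ) ^ i) * q ^ i)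
        = t ^ i * (t - 1) := by
      intro i
      have e1 : (k : ℝ) ^ i * q ^ i = t ^ i := by rw [← mul_pow, hkq]
      have e2 : t - 1 = ((k : ℝ) - 1) * ρ := by rw [ht]; ring
      calc ρ * (((k : ℝ) ^ (i + 1) - (k : ℝ) ^ i) * q ^ i)
          = (((k : ℝ) - 1) * ρ) * ((k : ℝ) ^ i * q ^ i) := by ring
        _ = t ^ i * (t - 1) := by rw [e1, e2]; ring
    rw [Finset.sum_congr rfl fun i _ => hterm i, ← Finset.sum_mul, geom_sum_mul]
  have hT : (k : ℝ) + ((k : ℝ) ^ 2 - (k : ℝ)) * ρ = (k : ℝ) * t := by rw [ht]; ring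
  rw [hT, mul_pow, Nat.cast_pow]
  rw [show σ ^ 2 + σ ^ 2 * ρ * G = σ ^ 2 * (1 + ρ * G) from by ring, hrG]
  ring

end aux

/-- Main theorem on the regular Gaussian tree: under the centered multivariate Gaussian with
covariance `C(k,m,ρ,σ)`, each node at level `p` (the sum of the leaves of the block
`J(p,r)`) is normal with mean `0` and variance `σ_{(p)}² = σ²·(k + (k² - k)ρ)^(m-p)`.
In particular (`p = 0`) the total portfolio is `N(0, σ²·(k + (k² - k)ρ)^m)`. -/
theorem gaussianTree_node_distribution (k m : ℕ) (hk : 2 ≤ k) (hm : 1 ≤ m) (σ ρ : ℝ)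
    (hσ : 0 < σ) (hρ_lb : -(1 / ((k : ℝ) - 1)) < ρ) (hρ_ub : ρ < 1)
    (hpsd : (treeCov k m ρ σ).PosSemidef)
    (p r : ℕ) (hp : p ≤ m) (hr : r < k ^ p) :
    (multivariateGaussian' 0 (treeCov k m ρ σ)).map
        (fun x => ∑ u ∈ treeBlock k m p r, x u)
      = gaussianReal 0
          (σ ^ 2 * ((k : ℝ) + ((k : ℝ) ^ 2 - (k : ℝ)) * ρ) ^ (m - p)).toNNReal := by

  have hLm : Measurable fun x : Fin (k ^ m) → ℝ => ∑ u ∈ treeBlock k m p r, x u :=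
    Finset.measurable_sum _ fun u _ => measurable_pi_apply u
  set S := (hpsd.1.eigenvectorUnitary.1 * Matrix.diagonal ((RCLike.ofReal : ℝ → ℝ) ∘ (√·) ∘ hpsd.1.eigenvalues) *
      (star hpsd.1.eigenvectorUnitary : Matrix (Fin (k ^ m)) (Fin (k ^ m)) ℝ)) with hS
  have hSmc : Continuous fun x : Fin (k ^ m) → ℝ => (0 : Fin (k ^ m) → ℝ) + S.mulVec x :=
    continuous_const.add (continuous_const.matrix_mulVec continuous_id)
  unfold multivariateGaussian'
  rw [dif_pos hpsd, Measure.map_map hLm hSmc.measurable]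
  have hfun : ((fun x : Fin (k ^ m) → ℝ => ∑ u ∈ treeBlock k m p r, x u)
        ∘ (fun x => (0 : Fin (k ^ m) → ℝ) + S.mulVec x))
      = fun x => ∑ i, (∑ u ∈ treeBlock k m p r, S u i) * x i := by
    funext x
    simp only [Function.comp_apply, Pi.add_apply, Pi.zero_apply, zero_add, Matrix.mulVec,
      dotProduct]
    rw [Finset.sum_comm]
    exact Finset.sum_congr rfl fun i _ => (Finset.sum_mul _ _ _).symm
  rw [hfun, stdGaussianPi_map_linear]
  congr 1
  have hherm : S.conjTranspose = S := by
    have hH := Matrix.isHermitian_mul_mul_conjTranspose hpsd.1.eigenvectorUnitary.1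
      (Matrix.isHermitian_diagonal ((RCLike.ofReal : ℝ → ℝ) ∘ (√·) ∘ hpsd.1.eigenvalues))
    rw [hS, Matrix.star_eq_conjTranspose]
    exact hH
  have hsymm : ∀ i j, S i j = S j i := by
    intro i j
    conv_lhs => rw [← hherm]
    simp [Matrix.conjTranspose_apply]
  have hSS : S * S = treeCov k m ρ σ := by
    have hU : (star hpsd.1.eigenvectorUnitary : Matrix (Fin (k ^ m)) (Fin (k ^ m)) ℝ) *
        hpsd.1.eigenvectorUnitary.1 = 1 := Unitary.coe_star_mul_self _
    conv_rhs => rw [hpsd.1.spectral_theorem, Unitary.conjStarAlgAut_apply]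
    rw [hS]
    simp only [Matrix.mul_assoc]
    rw [← Matrix.mul_assoc (star hpsd.1.eigenvectorUnitary : Matrix (Fin (k ^ m)) (Fin (k ^ m)) ℝ),
      hU, Matrix.one_mul, ← Matrix.mul_assoc (Matrix.diagonal _), Matrix.diagonal_mul_diagonal]
    congr 2
    funext i
    congr 1
    funext j
    show √(hpsd.1.eigenvalues j) * √(hpsd.1.eigenvalues j) = hpsd.1.eigenvalues j
    exact Real.mul_self_sqrt (hpsd.eigenvalues_nonneg j)
  have hsum : ∑ i, (∑ u ∈ treeBlock k m p r, S u i) ^ 2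
      = ∑ u ∈ treeBlock k m p r, ∑ v ∈ treeBlock k m p r, treeCov k m ρ σ u v := by
    simp_rw [sq, Finset.sum_mul, Finset.mul_sum]
    rw [Finset.sum_comm]
    refine Finset.sum_congr rfl fun u _ => ?_
    rw [Finset.sum_comm]
    refine Finset.sum_congr rfl fun v _ => ?_
    rw [← hSS, Matrix.mul_apply]
    exact Finset.sum_congr rfl fun i _ => by rw [hsymm v i]
  rw [hsum, treeCov_blockSum k m hk hm σ ρ p r hp hr]
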